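/- Let k > 0, σ > 0, x > 0, and let r, T be real numbers. For t < T define d1(t) = (log(x/k) + (r + σ²/2)·(T - t))/(σ·√(T - t)) and d2(t) = d1(t) - σ·√(T - t), and let Φ and φ be the standard normal cumulative distribution function and probability density function. Then the Black–Scholes call price function t ↦ w(t) = x·Φ(d1(t)) - k·exp(-r·(T - t))·Φ(d2(t)) is differentiable at every t < T with derivative ∂w/∂t = -x·φ(d1(t))·σ/(2·√(T - t)) - r·k·exp(-r·(T - t))·Φ(d2(t)). -/

import Mathlib

open Real MeasureTheory

/-- Standard normal probability density function. -/
noncomputable def stdNormalPDF (y : ℝ) : ℝ := (1 / Real.sqrt (2 * π)) * Real.exp (-y ^ 2 / 2)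

/-- Standard normal cumulative distribution function. -/
noncomputable def stdNormalCDF (y : ℝ) : ℝ := ∫ u in Set.Iic y, stdNormalPDF u

lemma integrable_stdNormalPDF : Integrable stdNormalPDF := by
  have h := (integrable_exp_neg_mul_sq (show (0:ℝ) < 1/2 by norm_num)).const_mul
    (1 / Real.sqrt (2 * π))
  refine h.congr (Filter.Eventually.of_forall fun y => ?_)
  simp only [stdNormalPDF]
  ring_nf

lemma continuous_stdNormalPDF : Continuous stdNormalPDF := by
  unfold stdNormalPDF; fun_prop

lemma hasDerivAt_stdNormalCDF (y : ℝ) : HasDerivAt stdNormalCDF (stdNormalPDF y) y := by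
  have hkey : ∀ z : ℝ, stdNormalCDF z = stdNormalCDF 0 + ∫ u in (0:ℝ)..z, stdNormalPDF u := by
    intro z
    have := intervalIntegral.integral_Iic_sub_Iic
      (integrable_stdNormalPDF.integrableOn (s := Set.Iic 0))
      (integrable_stdNormalPDF.integrableOn (s := Set.Iic z))
    simp only [stdNormalCDF]
    linarith [this]
  have hD : HasDerivAt (fun z => stdNormalCDF 0 + ∫ u in (0:ℝ)..z, stdNormalPDF u)
      (stdNormalPDF y) y := by
    refine HasDerivAt.const_add _ ?_
    exact intervalIntegral.integral_hasDerivAt_right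
      (integrable_stdNormalPDF.intervalIntegrable)
      continuous_stdNormalPDF.aestronglyMeasurable.stronglyMeasurableAtFilter
      continuous_stdNormalPDF.continuousAt
  exact hD.congr_of_eventuallyEq (Filter.Eventually.of_forall hkey)

theorem stmt_8 (k σ x r T : ℝ) (hk : 0 < k) (hσ : 0 < σ) (hx : 0 < x)
    (d1 : ℝ → ℝ)
    (hd1 : ∀ t, d1 t = (Real.log (x / k) + (r + σ ^ 2 / 2) * (T - t)) / (σ * Real.sqrt (T - t)))
    (d2 : ℝ → ℝ) (hd2 : ∀ t, d2 t = d1 t - σ * Real.sqrt (T - t)) :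
    ∀ t : ℝ, t < T →
      HasDerivAt
        (fun s : ℝ => x * stdNormalCDF (d1 s) - k * Real.exp (-r * (T - s)) * stdNormalCDF (d2 s))
        (-x * stdNormalPDF (d1 t) * σ / (2 * Real.sqrt (T - t)) -
          r * k * Real.exp (-r * (T - t)) * stdNormalCDF (d2 t)) t := by
  intro t ht
  have hτ : (0:ℝ) < T - t := by linarith
  set u : ℝ := Real.sqrt (T - t) with hu_def
  have hu : 0 < u := Real.sqrt_pos.mpr hτ
  have hu2 : u ^ 2 = T - t := Real.sq_sqrt hτ.le
  -- derivative of s ↦ sqrt (T - s)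
  have hsqrt : HasDerivAt (fun s : ℝ => Real.sqrt (T - s)) (-(1 / (2 * u))) t := by
    have h1 : HasDerivAt (fun s : ℝ => T - s) (-1) t := by
      simpa using (hasDerivAt_id t).const_sub T
    have h2 := (Real.hasDerivAt_sqrt (ne_of_gt hτ)).comp t h1
    refine h2.congr_deriv (Eq.symm ?_); field_simp; rfl
  -- differentiability of d1
  have hd1f : d1 = fun s => (Real.log (x / k) + (r + σ ^ 2 / 2) * (T - s)) / (σ * Real.sqrt (T - s)) :=
    funext hd1
  have hnum : HasDerivAt (fun s : ℝ => Real.log (x / k) + (r + σ ^ 2 / 2) * (T - s))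
      (-(r + σ ^ 2 / 2)) t := by
    have h1 : HasDerivAt (fun s : ℝ => T - s) (-1) t := by
      simpa using (hasDerivAt_id t).const_sub T
    have := (h1.const_mul (r + σ ^ 2 / 2)).const_add (Real.log (x / k))
    refine this.congr_deriv (Eq.symm ?_); ring
  have hden : HasDerivAt (fun s : ℝ => σ * Real.sqrt (T - s)) (σ * -(1 / (2 * u))) t :=
    hsqrt.const_mul σ
  have hdenne : σ * Real.sqrt (T - t) ≠ 0 := by positivity
  have hD1 : HasDerivAt d1
      ((-(r + σ ^ 2 / 2) * (σ * Real.sqrt (T - t)) -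
        (Real.log (x / k) + (r + σ ^ 2 / 2) * (T - t)) * (σ * -(1 / (2 * u)))) /
        (σ * Real.sqrt (T - t)) ^ 2) t := by
    rw [hd1f]; exact hnum.div hden hdenne
  set D1 := (-(r + σ ^ 2 / 2) * (σ * Real.sqrt (T - t)) -
        (Real.log (x / k) + (r + σ ^ 2 / 2) * (T - t)) * (σ * -(1 / (2 * u)))) /
        (σ * Real.sqrt (T - t)) ^ 2 with hD1def
  have hD2 : HasDerivAt d2 (D1 + σ / (2 * u)) t := by
    rw [funext hd2]
    have := hD1.sub (hsqrt.const_mul σ)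
    refine this.congr_deriv (Eq.symm ?_); ring
  -- key identity
  have hkey : k * Real.exp (-r * (T - t)) * stdNormalPDF (d2 t) = x * stdNormalPDF (d1 t) := by
    have hd2t : d2 t = d1 t - σ * u := hd2 t
    have hd1t : d1 t * (σ * u) = Real.log (x / k) + (r + σ ^ 2 / 2) * (T - t) := by
      rw [hd1 t, ← hu_def]; field_simp
    have hsq : -(d2 t) ^ 2 / 2 = -(d1 t) ^ 2 / 2 + (Real.log (x / k) + r * (T - t)) := by
      have : (d1 t) ^ 2 - (d2 t) ^ 2 = 2 * (d1 t * (σ * u)) - σ ^ 2 * u ^ 2 := by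
        rw [hd2t]; ring
      rw [hd1t, hu2] at this
      nlinarith [this]
    simp only [stdNormalPDF]
    rw [hsq, Real.exp_add, Real.exp_add, Real.exp_log (by positivity : (0:ℝ) < x / k),
      show -r * (T - t) = -(r * (T - t)) by ring, Real.exp_neg]
    field_simp
  -- assemble
  have hΦ1 : HasDerivAt (fun s => stdNormalCDF (d1 s)) (stdNormalPDF (d1 t) * D1) t :=
    (hasDerivAt_stdNormalCDF (d1 t)).comp t hD1
  have hΦ2 : HasDerivAt (fun s => stdNormalCDF (d2 s))
      (stdNormalPDF (d2 t) * (D1 + σ / (2 * u))) t :=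
    (hasDerivAt_stdNormalCDF (d2 t)).comp t hD2
  have hexp : HasDerivAt (fun s : ℝ => Real.exp (-r * (T - s))) (Real.exp (-r * (T - t)) * r) t := by
    have h1 : HasDerivAt (fun s : ℝ => -r * (T - s)) r t := by
      have : HasDerivAt (fun s : ℝ => T - s) (-1) t := by
        simpa using (hasDerivAt_id t).const_sub T
      simpa using this.const_mul (-r)
    exact (Real.hasDerivAt_exp (-r * (T - t))).comp t h1
  have htotal := (hΦ1.const_mul x).sub ((hexp.const_mul k).mul hΦ2)
  refine htotal.congr_deriv (Eq.symm ?_)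
  linear_combination (D1 + σ / (2 * u)) * hkey
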